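/- Let z be a point of the upper half-plane ℍ and let φ : [0,∞) → [0,∞] be measurable. Then ∫_ℍ φ(u(z,w)) · ρ(z,w) dμ(w) = 8π ∫₀^∞ φ(u) · arsinh(√u) du, where both sides are extended-real-valued Lebesgue integrals. -/

import Mathlib

open MeasureTheory
open scoped ENNReal

/-- `u(z,w) = |z − w|² / (4 Im z Im w)`. -/
noncomputable def hypu (z w : ℂ) : ℝ :=
  ‖z - w‖ ^ 2 / (4 * z.im * w.im)

/-- The hyperbolic distance `ρ(z,w) = 2 arsinh(|z − w| / (2 √(Im z Im w)))`. -/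
noncomputable def hypd (z w : ℂ) : ℝ :=
  2 * Real.arsinh (‖z - w‖ / (2 * Real.sqrt (z.im * w.im)))


section Aux
open Set

lemma lintegral_image_deriv {s : Set ℝ} {f f' : ℝ → ℝ}
    (hs : MeasurableSet s) (hf' : ∀ x ∈ s, HasDerivWithinAt f (f' x) s x)
    (hf : Set.InjOn f s) (g : ℝ → ℝ≥0∞) :
    ∫⁻ x in f '' s, g x = ∫⁻ x in s, ENNReal.ofReal |f' x| * g (f x) := by
  simpa only [ContinuousLinearMap.det_toSpanSingleton] using
    MeasureTheory.lintegral_image_eq_lintegral_abs_det_fderiv_mul volume hs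
      (fun x hx => (hf' x hx).hasFDerivWithinAt) hf g

-- A : inner x-substitution

lemma lintegral_complex_norm (g : ℝ → ℝ≥0∞) (hg : Measurable g) :
    ∫⁻ z : ℂ, g ‖z‖ =
      (volume : Measure ℂ).toSphere Set.univ *
        ∫⁻ r in Set.Ioi (0:ℝ), ENNReal.ofReal r * g r := by
  have hsc : MeasurableSet ({0}ᶜ : Set ℂ) := (measurableSet_singleton 0).compl
  calc ∫⁻ z : ℂ, g ‖z‖ = ∫⁻ z in ({0}ᶜ : Set ℂ), g ‖z‖ := by
        rw [MeasureTheory.restrict_compl_singleton]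
    _ = ∫⁻ x : ({0}ᶜ : Set ℂ), g ‖x.1‖ ∂((volume : Measure ℂ).comap (↑)) :=
        (lintegral_subtype_comap hsc fun z => g ‖z‖).symm
    _ = ∫⁻ p : Metric.sphere (0:ℂ) 1 × Set.Ioi (0:ℝ),
          g p.2.1 ∂((volume : Measure ℂ).toSphere.prod
            (.volumeIoiPow (Module.finrank ℝ ℂ - 1))) := by
        rw [← (Measure.measurePreserving_homeomorphUnitSphereProd
          (volume : Measure ℂ)).lintegral_comp
          (f := fun p : Metric.sphere (0:ℂ) 1 × Set.Ioi (0:ℝ) => g p.2.1)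
          (hg.comp (measurable_subtype_coe.comp measurable_snd))]
        congr 1
        ext x; simp
    _ = ∫⁻ _x : Metric.sphere (0:ℂ) 1,
          (∫⁻ r : Set.Ioi (0:ℝ), g r.1 ∂(Measure.volumeIoiPow (Module.finrank ℝ ℂ - 1)))
            ∂(volume : Measure ℂ).toSphere :=
        lintegral_prod _ (by fun_prop)
    _ = (volume : Measure ℂ).toSphere Set.univ *
          ∫⁻ r : Set.Ioi (0:ℝ), g r.1 ∂(Measure.volumeIoiPow (Module.finrank ℝ ℂ - 1)) := by
        rw [lintegral_const, mul_comm]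
    _ = (volume : Measure ℂ).toSphere Set.univ *
          ∫⁻ r in Set.Ioi (0:ℝ), ENNReal.ofReal r * g r := by
        congr 1
        rw [Measure.volumeIoiPow, lintegral_withDensity_eq_lintegral_mul _
          (by fun_prop) (by fun_prop : Measurable fun r : Set.Ioi (0:ℝ) => g r.1)]
        rw [← lintegral_subtype_comap measurableSet_Ioi
          (fun r => ENNReal.ofReal r * g r)]
        simp [Complex.finrank_real_complex]

lemma lintegral_sq_subst (F : ℝ → ℝ≥0∞) (hF : Measurable F) :
    ∫⁻ u in Set.Ioi (0:ℝ), F u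
      = 2 * ∫⁻ r in Set.Ioi (0:ℝ), ENNReal.ofReal r * F (r ^ 2) := by
  have himg : (fun r : ℝ => r ^ 2) '' Set.Ioi 0 = Set.Ioi 0 := by
    ext u
    constructor
    · rintro ⟨r, hr, rfl⟩; exact pow_pos (Set.mem_Ioi.mp hr) 2
    · intro hu
      exact ⟨Real.sqrt u, Real.sqrt_pos.2 hu, Real.sq_sqrt (le_of_lt hu)⟩
  have hinj : Set.InjOn (fun r : ℝ => r ^ 2) (Set.Ioi 0) := by
    intro a ha b hb h
    simp only [Set.mem_Ioi] at ha hb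
    simp only at h
    nlinarith
  have := lintegral_image_deriv (f := fun r : ℝ => r ^ 2) (f' := fun r => 2 * r)
    measurableSet_Ioi (fun x _ => by
      simpa using (hasDerivAt_pow 2 x).hasDerivWithinAt) hinj F
  rw [himg] at this
  rw [this, ← lintegral_const_mul _ (by fun_prop)]
  refine setLIntegral_congr_fun measurableSet_Ioi ?_
  intro r hr
  beta_reduce
  simp only [Set.mem_Ioi] at hr
  rw [abs_of_pos (by positivity : (0:ℝ) < 2 * r), ENNReal.ofReal_mul (by norm_num),
    ENNReal.ofReal_ofNat, mul_assoc]

lemma lintegral_radial (F : ℝ → ℝ≥0∞) (hF : Measurable F) :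
    ∫⁻ p : ℝ × ℝ, F (p.1 ^ 2 + p.2 ^ 2) =
      ENNReal.ofReal Real.pi * ∫⁻ u in Set.Ioi (0:ℝ), F u := by
  have h1 : ∫⁻ p : ℝ × ℝ, F (p.1 ^ 2 + p.2 ^ 2) = ∫⁻ z : ℂ, F (‖z‖ ^ 2) := by
    rw [← Complex.volume_preserving_equiv_real_prod.lintegral_comp
      (f := fun p : ℝ × ℝ => F (p.1 ^ 2 + p.2 ^ 2)) (by fun_prop)]
    congr 1
    ext z
    congr 1
    have : (Complex.measurableEquivRealProd z) = (z.re, z.im) := rfl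
    rw [this]
    simp [← Complex.normSq_eq_norm_sq, Complex.normSq_apply]
    ring
  have h2 := lintegral_complex_norm (fun r => F (r ^ 2)) (by fun_prop)
  have h3 : (volume : Measure ℂ).toSphere Set.univ = 2 * ENNReal.ofReal Real.pi := by
    rw [Measure.toSphere_apply_univ, Complex.volume_ball, Complex.finrank_real_complex]
    rw [← ENNReal.ofReal_coe_nnreal, NNReal.coe_real_pi]
    simp
  rw [h1, h2, h3, lintegral_sq_subst F hF]
  ring

lemma subA (x0 y0 y : ℝ) (hy0 : 0 < y0) (hy : 0 < y) (F : ℝ → ℝ≥0∞) :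
    ∫⁻ x : ℝ, F (((x - x0) ^ 2 + (y - y0) ^ 2) / (4 * y0 * y)) =
      ∫⁻ t : ℝ, ENNReal.ofReal (2 * Real.sqrt (y0 * y)) *
        F (t ^ 2 + (y - y0) ^ 2 / (4 * y0 * y)) := by
  set c : ℝ := 2 * Real.sqrt (y0 * y) with hc_def
  have hc : 0 < c := by positivity
  have hc2 : c ^ 2 = 4 * y0 * y := by
    rw [hc_def, mul_pow, Real.sq_sqrt (by positivity)]; ring
  have himg : (fun t : ℝ => x0 + c * t) '' Set.univ = Set.univ := by
    rw [Set.image_univ, Set.range_eq_univ]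
    intro x; exact ⟨(x - x0) / c, by field_simp; ring⟩
  have h := lintegral_image_deriv (s := Set.univ) (f := fun t => x0 + c * t)
    (f' := fun _ => c) MeasurableSet.univ
    (fun t _ => by simpa using (((hasDerivAt_id t).const_mul c).const_add x0).hasDerivWithinAt (s := Set.univ))
    (fun a _ b _ h => by
      simp only [add_right_inj] at h
      exact mul_left_cancel₀ hc.ne' h)
    (fun x => F (((x - x0) ^ 2 + (y - y0) ^ 2) / (4 * y0 * y)))
  rw [himg, Measure.restrict_univ] at h
  rw [h]
  refine lintegral_congr fun t => ?_
  rw [abs_of_pos hc]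
  congr 2
  have h4 : (4 : ℝ) * y0 * y ≠ 0 := by positivity
  field_simp
  nlinarith [hc2]

lemma subB (y0 t : ℝ) (hy0 : 0 < y0) (F : ℝ → ℝ≥0∞) :
    ∫⁻ y in Set.Ioi (0:ℝ),
        ENNReal.ofReal (2 * Real.sqrt (y0 * y) * (y ^ 2)⁻¹) *
          F (t ^ 2 + (y - y0) ^ 2 / (4 * y0 * y)) =
      ∫⁻ r : ℝ, ENNReal.ofReal (2 * Real.exp (-(r / 2))) *
        F (t ^ 2 + Real.sinh (r / 2) ^ 2) := by
  have himg : (fun r : ℝ => y0 * Real.exp r) '' Set.univ = Set.Ioi 0 := by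
    rw [Set.image_univ]
    ext y
    simp only [Set.mem_range, Set.mem_Ioi]
    constructor
    · rintro ⟨r, rfl⟩; positivity
    · intro hy
      exact ⟨Real.log (y / y0), by
        rw [Real.exp_log (by positivity)]; field_simp⟩
  have h := lintegral_image_deriv (s := Set.univ) (f := fun r => y0 * Real.exp r)
    (f' := fun r => y0 * Real.exp r) MeasurableSet.univ
    (fun r _ => by simpa using ((Real.hasDerivAt_exp r).const_mul y0).hasDerivWithinAt (s := Set.univ))
    (fun a _ b _ h => by
      simp only at h
      exact Real.exp_injective (mul_left_cancel₀ hy0.ne' h))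
    (fun y => ENNReal.ofReal (2 * Real.sqrt (y0 * y) * (y ^ 2)⁻¹) *
      F (t ^ 2 + (y - y0) ^ 2 / (4 * y0 * y)))
  rw [himg, Measure.restrict_univ] at h
  rw [h]
  refine lintegral_congr fun r => ?_
  have hE : (0:ℝ) < Real.exp (r / 2) := Real.exp_pos _
  have hEr : Real.exp r = Real.exp (r / 2) ^ 2 := by
    rw [sq, ← Real.exp_add]; ring_nf
  have hsqrt : Real.sqrt (y0 * (y0 * Real.exp r)) = y0 * Real.exp (r / 2) := by
    rw [hEr, show y0 * (y0 * Real.exp (r/2) ^ 2) = (y0 * Real.exp (r/2)) ^ 2 by ring,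
      Real.sqrt_sq (by positivity)]
  rw [abs_of_pos (by positivity : (0:ℝ) < y0 * Real.exp r), ← mul_assoc,
    ← ENNReal.ofReal_mul (by positivity)]
  congr 2
  · rw [hsqrt, hEr, Real.exp_neg]
    field_simp
  · rw [Real.sinh_eq, Real.exp_neg, hEr]
    have h1 : y0 * Real.exp (r/2) ^ 2 - y0 = y0 * (Real.exp (r/2) ^ 2 - 1) := by ring
    field_simp
    ring

lemma lintegral_neg' (g : ℝ → ℝ≥0∞) : ∫⁻ r : ℝ, g r = ∫⁻ r : ℝ, g (-r) := by
  have himg : (fun r : ℝ => -r) '' Set.univ = Set.univ := by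
    rw [Set.image_univ, Set.range_eq_univ]; exact neg_surjective
  have h := lintegral_image_deriv (s := Set.univ) (f := fun r => -r)
    (f' := fun _ => -1) MeasurableSet.univ
    (fun r _ => (hasDerivAt_neg r).hasDerivWithinAt (s := Set.univ))
    (fun a _ b _ h => by simpa using h) g
  rw [himg, Measure.restrict_univ] at h
  rw [h]
  simp

lemma subC (t : ℝ) (F : ℝ → ℝ≥0∞) (hF : Measurable F) :
    ∫⁻ r : ℝ, ENNReal.ofReal (2 * Real.exp (-(r / 2))) *
        F (t ^ 2 + Real.sinh (r / 2) ^ 2) =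
      ∫⁻ r : ℝ, ENNReal.ofReal (2 * Real.cosh (r / 2)) *
        F (t ^ 2 + Real.sinh (r / 2) ^ 2) := by
  have hAB : ∫⁻ r : ℝ, ENNReal.ofReal (Real.exp (-(r / 2))) *
        F (t ^ 2 + Real.sinh (r / 2) ^ 2) =
      ∫⁻ r : ℝ, ENNReal.ofReal (Real.exp (r / 2)) *
        F (t ^ 2 + Real.sinh (r / 2) ^ 2) := by
    rw [lintegral_neg' (fun r => ENNReal.ofReal (Real.exp (-(r / 2))) *
        F (t ^ 2 + Real.sinh (r / 2) ^ 2))]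
    refine lintegral_congr fun r => ?_
    simp [neg_div, Real.sinh_neg, neg_sq]
  have hmeas : Measurable fun r : ℝ => ENNReal.ofReal (Real.exp (r / 2)) *
      F (t ^ 2 + Real.sinh (r / 2) ^ 2) := by fun_prop
  have hmeas' : Measurable fun r : ℝ => ENNReal.ofReal (Real.exp (-(r / 2))) *
      F (t ^ 2 + Real.sinh (r / 2) ^ 2) := by fun_prop
  calc ∫⁻ r : ℝ, ENNReal.ofReal (2 * Real.exp (-(r / 2))) *
        F (t ^ 2 + Real.sinh (r / 2) ^ 2)
      = ∫⁻ r : ℝ, (ENNReal.ofReal (Real.exp (-(r / 2))) *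
          F (t ^ 2 + Real.sinh (r / 2) ^ 2) +
        ENNReal.ofReal (Real.exp (-(r / 2))) *
          F (t ^ 2 + Real.sinh (r / 2) ^ 2)) := by
        refine lintegral_congr fun r => ?_
        rw [← two_mul, ← mul_assoc]
        congr 1
        rw [ENNReal.ofReal_mul (by norm_num), ENNReal.ofReal_ofNat]
    _ = (∫⁻ r : ℝ, ENNReal.ofReal (Real.exp (-(r / 2))) *
          F (t ^ 2 + Real.sinh (r / 2) ^ 2)) +
        ∫⁻ r : ℝ, ENNReal.ofReal (Real.exp (-(r / 2))) *
          F (t ^ 2 + Real.sinh (r / 2) ^ 2) := lintegral_add_left hmeas' _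
    _ = ∫⁻ r : ℝ, (ENNReal.ofReal (Real.exp (r / 2)) *
          F (t ^ 2 + Real.sinh (r / 2) ^ 2) +
        ENNReal.ofReal (Real.exp (-(r / 2))) *
          F (t ^ 2 + Real.sinh (r / 2) ^ 2)) := by
        rw [lintegral_add_left hmeas, hAB]
    _ = ∫⁻ r : ℝ, ENNReal.ofReal (2 * Real.cosh (r / 2)) *
        F (t ^ 2 + Real.sinh (r / 2) ^ 2) := by
        refine lintegral_congr fun r => ?_
        rw [← add_mul, ← ENNReal.ofReal_add (by positivity) (by positivity),
          Real.cosh_eq]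
        congr 2
        ring

lemma subD (t : ℝ) (F : ℝ → ℝ≥0∞) :
    ∫⁻ r : ℝ, ENNReal.ofReal (2 * Real.cosh (r / 2)) *
        F (t ^ 2 + Real.sinh (r / 2) ^ 2) =
      ∫⁻ s : ℝ, 4 * F (t ^ 2 + s ^ 2) := by
  have himg : (fun r : ℝ => Real.sinh (r / 2)) '' Set.univ = Set.univ := by
    rw [Set.image_univ, Set.range_eq_univ]
    intro s
    exact ⟨2 * Real.arsinh s, by
      show Real.sinh (2 * Real.arsinh s / 2) = s
      rw [mul_div_cancel_left₀ _ (two_ne_zero : (2:ℝ) ≠ 0), Real.sinh_arsinh]⟩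
  have h := lintegral_image_deriv (s := Set.univ) (f := fun r => Real.sinh (r / 2))
    (f' := fun r => Real.cosh (r / 2) * (1 / 2)) MeasurableSet.univ
    (fun r _ => by
      have := (Real.hasDerivAt_sinh (r / 2)).comp r ((hasDerivAt_id r).div_const 2)
      simpa [Function.comp_def] using this.hasDerivWithinAt (s := Set.univ))
    (fun a _ b _ h => by
      simp only at h
      have := Real.sinh_injective h
      linarith)
    (fun s => 4 * F (t ^ 2 + s ^ 2))
  rw [himg, Measure.restrict_univ] at h
  rw [h]
  refine lintegral_congr fun r => ?_
  rw [abs_of_pos (by positivity : (0:ℝ) < Real.cosh (r / 2) * (1 / 2)),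
    show (4 : ℝ≥0∞) = ENNReal.ofReal 4 by simp, ← mul_assoc,
    ← ENNReal.ofReal_mul (by positivity)]
  congr 2
  ring

lemma halfplane_main (x0 y0 : ℝ) (hy0 : 0 < y0) (F : ℝ → ℝ≥0∞) (hF : Measurable F) :
    ∫⁻ p in {p : ℝ × ℝ | 0 < p.2},
        F (((p.1 - x0) ^ 2 + (p.2 - y0) ^ 2) / (4 * y0 * p.2)) *
          ENNReal.ofReal ((p.2 ^ 2)⁻¹)
      = ENNReal.ofReal (4 * Real.pi) * ∫⁻ u in Set.Ioi (0:ℝ), F u := by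
  have hset : {p : ℝ × ℝ | 0 < p.2} = Set.univ ×ˢ Set.Ioi (0:ℝ) := by
    ext p; simp [Set.mem_prod]
  rw [hset, Measure.volume_eq_prod, ← Measure.prod_restrict, Measure.restrict_univ]
  rw [lintegral_prod_symm _ (by fun_prop :
    Measurable fun p : ℝ × ℝ => F (((p.1 - x0) ^ 2 + (p.2 - y0) ^ 2) / (4 * y0 * p.2)) *
      ENNReal.ofReal ((p.2 ^ 2)⁻¹)).aemeasurable]
  have step2 : ∫⁻ y in Set.Ioi (0:ℝ), ∫⁻ x : ℝ,
        F (((x - x0) ^ 2 + (y - y0) ^ 2) / (4 * y0 * y)) * ENNReal.ofReal ((y ^ 2)⁻¹)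
      = ∫⁻ y in Set.Ioi (0:ℝ), ∫⁻ t : ℝ,
        ENNReal.ofReal (2 * Real.sqrt (y0 * y) * (y ^ 2)⁻¹) *
          F (t ^ 2 + (y - y0) ^ 2 / (4 * y0 * y)) := by
    refine setLIntegral_congr_fun measurableSet_Ioi ?_
    intro y hy
    beta_reduce
    simp only [Set.mem_Ioi] at hy
    rw [lintegral_mul_const _ (by fun_prop), subA x0 y0 y hy0 hy F,
      ← lintegral_mul_const _ (by fun_prop :
        Measurable fun t : ℝ => ENNReal.ofReal (2 * Real.sqrt (y0 * y)) *
          F (t ^ 2 + (y - y0) ^ 2 / (4 * y0 * y)))]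
    refine lintegral_congr fun t => ?_
    rw [mul_right_comm, ← ENNReal.ofReal_mul (by positivity)]
  rw [step2]
  rw [lintegral_lintegral_swap (by fun_prop :
    Measurable (Function.uncurry fun y t : ℝ =>
      ENNReal.ofReal (2 * Real.sqrt (y0 * y) * (y ^ 2)⁻¹) *
        F (t ^ 2 + (y - y0) ^ 2 / (4 * y0 * y)))).aemeasurable]
  have step3 : ∫⁻ t : ℝ, ∫⁻ y in Set.Ioi (0:ℝ),
        ENNReal.ofReal (2 * Real.sqrt (y0 * y) * (y ^ 2)⁻¹) *
          F (t ^ 2 + (y - y0) ^ 2 / (4 * y0 * y))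
      = ∫⁻ t : ℝ, ∫⁻ s : ℝ, 4 * F (t ^ 2 + s ^ 2) := by
    refine lintegral_congr fun t => ?_
    rw [subB y0 t hy0 F, subC t F hF, subD t F]
  rw [step3]
  rw [← lintegral_prod (fun p : ℝ × ℝ => 4 * F (p.1 ^ 2 + p.2 ^ 2))
    (by fun_prop : Measurable fun p : ℝ × ℝ => 4 * F (p.1 ^ 2 + p.2 ^ 2)).aemeasurable]
  rw [← Measure.volume_eq_prod, lintegral_const_mul 4 (by fun_prop), lintegral_radial F hF,
    ← mul_assoc]
  congr 1
  rw [ENNReal.ofReal_mul (by norm_num), ENNReal.ofReal_ofNat]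

/-- For `z ∈ ℍ` and measurable `φ : [0,∞) → [0,∞]`,
`∫_ℍ φ(u(z,w)) ρ(z,w) dμ(w) = 8π ∫₀^∞ φ(u) arsinh(√u) du`, where `dμ = y⁻² dx dy` is the
hyperbolic measure, written in the coordinates `w = x + iy`. -/
theorem stmt6 (z : ℂ) (hz : 0 < z.im) (φ : ℝ → ℝ≥0∞) (hφ : Measurable φ) :
    (∫⁻ p in {p : ℝ × ℝ | 0 < p.2},
        φ (hypu z ((p.1 : ℂ) + (p.2 : ℂ) * Complex.I)) *
          ENNReal.ofReal (hypd z ((p.1 : ℂ) + (p.2 : ℂ) * Complex.I)) *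
          ENNReal.ofReal ((p.2 ^ 2)⁻¹)) =
      ENNReal.ofReal (8 * Real.pi) *
        ∫⁻ u in Set.Ioi (0:ℝ), φ u * ENNReal.ofReal (Real.arsinh (Real.sqrt u)) := by
  set F : ℝ → ℝ≥0∞ := fun u => φ u * ENNReal.ofReal (2 * Real.arsinh (Real.sqrt u)) with hF_def
  have hF : Measurable F := by
    apply hφ.mul
    exact ENNReal.measurable_ofReal.comp
      ((measurable_const.mul (Real.continuous_arsinh.measurable.comp
        Real.continuous_sqrt.measurable)))
  have hmeasset : MeasurableSet {p : ℝ × ℝ | 0 < p.2} :=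
    measurableSet_lt measurable_const measurable_snd
  have key : ∀ p : ℝ × ℝ, 0 < p.2 →
      φ (hypu z ((p.1 : ℂ) + (p.2 : ℂ) * Complex.I)) *
          ENNReal.ofReal (hypd z ((p.1 : ℂ) + (p.2 : ℂ) * Complex.I)) *
          ENNReal.ofReal ((p.2 ^ 2)⁻¹)
        = F (((p.1 - z.re) ^ 2 + (p.2 - z.im) ^ 2) / (4 * z.im * p.2)) *
            ENNReal.ofReal ((p.2 ^ 2)⁻¹) := by
    intro p hp
    set w : ℂ := (p.1 : ℂ) + (p.2 : ℂ) * Complex.I with hw_def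
    have hwim : w.im = p.2 := by simp [hw_def]
    have habs : ‖z - w‖ ^ 2 = (p.1 - z.re) ^ 2 + (p.2 - z.im) ^ 2 := by
      rw [Complex.sq_norm, Complex.normSq_apply]
      simp [hw_def]
      ring
    have hu : hypu z w = ((p.1 - z.re) ^ 2 + (p.2 - z.im) ^ 2) / (4 * z.im * p.2) := by
      rw [hypu, habs, hwim]
    have hm : (0:ℝ) < z.im * w.im := by rw [hwim]; positivity
    have hsq : hypu z w = (‖z - w‖ / (2 * Real.sqrt (z.im * w.im))) ^ 2 := by
      rw [hypu, div_pow, mul_pow, Real.sq_sqrt hm.le]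
      congr 1
      ring
    have hd : hypd z w = 2 * Real.arsinh (Real.sqrt (hypu z w)) := by
      rw [hypd, hsq, Real.sqrt_sq (by positivity)]
    rw [hd, hu, hF_def]
  calc (∫⁻ p in {p : ℝ × ℝ | 0 < p.2},
        φ (hypu z ((p.1 : ℂ) + (p.2 : ℂ) * Complex.I)) *
          ENNReal.ofReal (hypd z ((p.1 : ℂ) + (p.2 : ℂ) * Complex.I)) *
          ENNReal.ofReal ((p.2 ^ 2)⁻¹))
      = ∫⁻ p in {p : ℝ × ℝ | 0 < p.2},
          F (((p.1 - z.re) ^ 2 + (p.2 - z.im) ^ 2) / (4 * z.im * p.2)) *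
            ENNReal.ofReal ((p.2 ^ 2)⁻¹) := by
        refine setLIntegral_congr_fun hmeasset ?_
        intro p hp
        exact key p hp
    _ = ENNReal.ofReal (4 * Real.pi) * ∫⁻ u in Set.Ioi (0:ℝ), F u :=
        halfplane_main z.re z.im hz F hF
    _ = ENNReal.ofReal (8 * Real.pi) *
          ∫⁻ u in Set.Ioi (0:ℝ), φ u * ENNReal.ofReal (Real.arsinh (Real.sqrt u)) := by
        have : ∫⁻ u in Set.Ioi (0:ℝ), F u
            = 2 * ∫⁻ u in Set.Ioi (0:ℝ), φ u * ENNReal.ofReal (Real.arsinh (Real.sqrt u)) := by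
          have hm2 : Measurable fun u : ℝ => φ u * ENNReal.ofReal (Real.arsinh (Real.sqrt u)) := by
            exact hφ.mul (ENNReal.measurable_ofReal.comp
              (Real.continuous_arsinh.measurable.comp Real.continuous_sqrt.measurable))
          rw [← lintegral_const_mul 2 hm2]
          refine lintegral_congr fun u => ?_
          rw [hF_def]
          simp only
          rw [ENNReal.ofReal_mul (by norm_num), ENNReal.ofReal_ofNat]
          ring
        have h8 : ENNReal.ofReal (8 * Real.pi) = ENNReal.ofReal (4 * Real.pi) * 2 := by
          rw [← ENNReal.ofReal_ofNat 2, ← ENNReal.ofReal_mul (by positivity)]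
          congr 1
          ring
        rw [this, ← mul_assoc, h8]

end Aux
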